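/- Let (Ω, ℱ, ℙ) be a probability space, m ≥ 1 an integer, (ℱ_k)_{0 ≤ k ≤ m} a filtration, and C > 0. Suppose Θ_0, …, Θ_{m−1} are integrable real-valued random variables such that for every k < m: Θ_k is ℱ_{k+1}-measurable, 𝔼[Θ_k ∣ ℱ_k] = 0 almost surely, and ∑_{n=2}^∞ (1/n!) 𝔼[|Θ_k|^n ∣ ℱ_k] ≤ C/m almost surely. Then for every real b, ℙ(∑_{k=0}^{m−1} Θ_k ≥ b) ≤ e^{C − b}. -/

import Mathlib

open MeasureTheory Filter


-- pointwise lemma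
lemma exp_le_aux (x : ℝ) : Real.exp x ≤ 1 + x + (Real.exp |x| - 1 - |x|) := by
  rcases le_or_gt 0 x with h | h
  · rw [abs_of_nonneg h]; ring_nf; exact le_rfl
  · rw [abs_of_neg h]
    have h1 : (-x) ≤ Real.sinh (-x) := Real.self_le_sinh_iff.2 (by linarith)
    rw [Real.sinh_eq] at h1
    ring_nf
    ring_nf at h1
    nlinarith [h1]

lemma aux_mul_bound {Ω : Type*} {m0 : MeasurableSpace Ω} (μ : Measure Ω) [IsProbabilityMeasure μ]
    {m' : MeasurableSpace Ω} (hm' : m' ≤ m0) {f g : Ω → ℝ}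
    (hf_meas : StronglyMeasurable[m'] f) (hf_nonneg : ∀ ω, 0 ≤ f ω) (hf_int : Integrable f μ)
    (hg_nonneg : ∀ ω, 0 ≤ g ω) (hg_int : Integrable g μ)
    {c : ℝ} (hc : 0 ≤ c) (hg_bound : ∀ᵐ ω ∂μ, (μ[g|m']) ω ≤ c) :
    Integrable (fun ω => f ω * g ω) μ ∧ ∫ ω, f ω * g ω ∂μ ≤ c * ∫ ω, f ω ∂μ := by
  set fN : ℕ → Ω → ℝ := fun N ω => min (f ω) N with hfN
  have hfN_meas : ∀ N, StronglyMeasurable[m'] (fN N) :=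
    fun N => (hf_meas.measurable.min measurable_const).stronglyMeasurable
  have hfN_nonneg : ∀ N ω, 0 ≤ fN N ω := fun N ω => le_min (hf_nonneg ω) (N.cast_nonneg)
  have hfN_le : ∀ N ω, fN N ω ≤ f ω := fun N ω => min_le_left _ _
  have hfN_asm : ∀ N, AEStronglyMeasurable[m0] (fN N) μ :=
    fun N => ((hfN_meas N).mono hm').aestronglyMeasurable
  have hfN_bdd : ∀ N, ∀ ω, ‖fN N ω‖ ≤ (N : ℝ) := by
    intro N ω
    rw [Real.norm_eq_abs, abs_of_nonneg (hfN_nonneg N ω)]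
    exact min_le_right _ _
  have hfNg_int : ∀ N, Integrable (fun ω => fN N ω * g ω) μ :=
    fun N => hg_int.bdd_mul (hfN_asm N) (Eventually.of_forall (hfN_bdd N))
  have hfN_int : ∀ N, Integrable (fN N) μ :=
    fun N => hf_int.mono (hfN_asm N) (Eventually.of_forall fun ω => by
      rw [Real.norm_eq_abs, Real.norm_eq_abs, abs_of_nonneg (hfN_nonneg N ω),
        abs_of_nonneg (hf_nonneg ω)]; exact hfN_le N ω)
  -- key truncated bound
  have key : ∀ N, ∫ ω, fN N ω * g ω ∂μ ≤ c * ∫ ω, f ω ∂μ := by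
    intro N
    have h1 : ∫ ω, fN N ω * g ω ∂μ = ∫ ω, (μ[fN N * g|m']) ω ∂μ :=
      (integral_condExp hm').symm
    have h2 : μ[fN N * g|m'] =ᵐ[μ] fN N * μ[g|m'] :=
      condExp_mul_of_stronglyMeasurable_left (hfN_meas N) (hfNg_int N) hg_int
    have hcond_int : Integrable (fN N * μ[g|m']) μ :=
      integrable_condExp.bdd_mul (hfN_asm N) (Eventually.of_forall (hfN_bdd N))
    have h3 : ∫ ω, (μ[fN N * g|m']) ω ∂μ = ∫ ω, fN N ω * (μ[g|m']) ω ∂μ :=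
      integral_congr_ae h2
    have h4 : ∫ ω, fN N ω * (μ[g|m']) ω ∂μ ≤ ∫ ω, c * fN N ω ∂μ := by
      refine integral_mono_ae hcond_int ((hfN_int N).const_mul c) ?_
      filter_upwards [hg_bound] with ω hω
      calc fN N ω * (μ[g|m']) ω ≤ fN N ω * c :=
            mul_le_mul_of_nonneg_left hω (hfN_nonneg N ω)
        _ = c * fN N ω := mul_comm _ _
    have h5 : ∫ ω, c * fN N ω ∂μ = c * ∫ ω, fN N ω ∂μ := integral_const_mul c _
    have h6 : ∫ ω, fN N ω ∂μ ≤ ∫ ω, f ω ∂μ :=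
      integral_mono (hfN_int N) hf_int (fun ω => hfN_le N ω)
    calc ∫ ω, fN N ω * g ω ∂μ = ∫ ω, fN N ω * (μ[g|m']) ω ∂μ := by rw [h1, h3]
      _ ≤ c * ∫ ω, fN N ω ∂μ := by rw [← h5]; exact h4
      _ ≤ c * ∫ ω, f ω ∂μ := mul_le_mul_of_nonneg_left h6 hc
  -- monotone convergence in lintegral
  have hsup : ∀ ω, (⨆ N : ℕ, ENNReal.ofReal (fN N ω * g ω)) = ENNReal.ofReal (f ω * g ω) := by
    intro ω
    refine le_antisymm (iSup_le fun N => ENNReal.ofReal_le_ofReal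
      (mul_le_mul_of_nonneg_right (hfN_le N ω) (hg_nonneg ω))) ?_
    refine le_iSup_of_le ⌈f ω⌉₊ ?_
    have : fN ⌈f ω⌉₊ ω = f ω := min_eq_left (Nat.le_ceil _)
    rw [this]
  have hmono : ∀ ω, Monotone fun N : ℕ => ENNReal.ofReal (fN N ω * g ω) := by
    intro ω N M hNM
    exact ENNReal.ofReal_le_ofReal (mul_le_mul_of_nonneg_right
      (min_le_min le_rfl (Nat.cast_le.2 hNM)) (hg_nonneg ω))
  have hlin : ∫⁻ ω, ENNReal.ofReal (f ω * g ω) ∂μ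
      = ⨆ N : ℕ, ∫⁻ ω, ENNReal.ofReal (fN N ω * g ω) ∂μ := by
    rw [← lintegral_iSup' (fun N => ((hfNg_int N).aestronglyMeasurable.aemeasurable).ennreal_ofReal)
      (Eventually.of_forall hmono)]
    exact lintegral_congr fun ω => (hsup ω).symm
  have hbd : ∫⁻ ω, ENNReal.ofReal (f ω * g ω) ∂μ ≤ ENNReal.ofReal (c * ∫ ω, f ω ∂μ) := by
    rw [hlin]
    refine iSup_le fun N => ?_
    rw [← ofReal_integral_eq_lintegral_ofReal (hfNg_int N)
      (Eventually.of_forall fun ω => mul_nonneg (hfN_nonneg N ω) (hg_nonneg ω))]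
    exact ENNReal.ofReal_le_ofReal (key N)
  have hfg_asm : AEStronglyMeasurable[m0] (fun ω => f ω * g ω) μ :=
    ((hf_meas.mono hm').aestronglyMeasurable).mul hg_int.aestronglyMeasurable
  have hfg_int : Integrable (fun ω => f ω * g ω) μ := by
    refine ⟨hfg_asm, ?_⟩
    rw [hasFiniteIntegral_iff_ofReal
      (Eventually.of_forall fun ω => mul_nonneg (hf_nonneg ω) (hg_nonneg ω))]
    exact lt_of_le_of_lt hbd ENNReal.ofReal_lt_top
  refine ⟨hfg_int, ?_⟩
  rw [← ENNReal.ofReal_le_ofReal_iff (mul_nonneg hc (integral_nonneg hf_nonneg)),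
    ofReal_integral_eq_lintegral_ofReal hfg_int
      (Eventually.of_forall fun ω => mul_nonneg (hf_nonneg ω) (hg_nonneg ω))]
  exact hbd

/-- Lemma 6.1 of the paper combined with the exponential Chebyshev inequality:
a tail bound for sums of martingale differences with controlled conditional
exponential moments. -/
theorem stmt_1 {Ω : Type*} {m0 : MeasurableSpace Ω} (μ : Measure Ω) [IsProbabilityMeasure μ]
    (m : ℕ) (hm : 1 ≤ m) (ℱ : Filtration ℕ m0) (C : ℝ) (hC : 0 < C)
    (Θ : ℕ → Ω → ℝ)
    (h_int : ∀ k < m, Integrable (Θ k) μ)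
    (h_meas : ∀ k < m, StronglyMeasurable[ℱ (k + 1)] (Θ k))
    (h_cond : ∀ k < m, μ[Θ k | ℱ k] =ᵐ[μ] 0)
    (h_exp_int : ∀ k < m, Integrable (fun ω => Real.exp (abs (Θ k ω))) μ)
    (h_bound : ∀ k < m,
      ∀ᵐ ω ∂μ,
        (μ[fun ω => Real.exp (abs (Θ k ω)) - 1 - abs (Θ k ω) | ℱ k]) ω ≤ C / m) :
    ∀ b : ℝ,
      μ {ω | b ≤ ∑ k ∈ Finset.range m, Θ k ω} ≤ ENNReal.ofReal (Real.exp (C - b)) := by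
  intro b
  have hm0 : (m : ℝ) ≠ 0 := Nat.cast_ne_zero.2 (by omega)
  have hCm : 0 ≤ C / m := div_nonneg hC.le (Nat.cast_nonneg m)
  -- measurability of Θ k w.r.t. m0
  have hΘ_meas : ∀ k < m, Measurable (Θ k) := fun k hk =>
    ((h_meas k hk).mono (ℱ.le (k + 1))).measurable
  -- integrability of exp (Θ k)
  have hexpΘ_int : ∀ k < m, Integrable (fun ω => Real.exp (Θ k ω)) μ := by
    intro k hk
    refine (h_exp_int k hk).mono ((hΘ_meas k hk).exp.aestronglyMeasurable) ?_
    refine Eventually.of_forall fun ω => ?_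
    rw [Real.norm_eq_abs, Real.norm_eq_abs, abs_of_nonneg (Real.exp_pos _).le,
      abs_of_nonneg (Real.exp_pos _).le]
    exact Real.exp_le_exp.2 (le_abs_self _)
  -- conditional bound for exp(Θ k)
  have hcond_bound : ∀ k < m,
      ∀ᵐ ω ∂μ, (μ[fun ω => Real.exp (Θ k ω)|ℱ k]) ω ≤ 1 + C / m := by
    intro k hk
    set φ : Ω → ℝ := fun ω => Real.exp |Θ k ω| - 1 - |Θ k ω| with hφ
    have hφ_int : Integrable φ μ :=
      (((h_exp_int k hk).sub (integrable_const 1)).sub (h_int k hk).abs)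
    have hh_int : Integrable (fun ω => 1 + Θ k ω + φ ω) μ :=
      ((integrable_const 1).add (h_int k hk)).add hφ_int
    have hmono : μ[fun ω => Real.exp (Θ k ω)|ℱ k]
        ≤ᵐ[μ] μ[fun ω => 1 + Θ k ω + φ ω|ℱ k] :=
      condExp_mono (hexpΘ_int k hk) hh_int (Eventually.of_forall fun ω => exp_le_aux _)
    have hadd1 : μ[fun ω => 1 + Θ k ω + φ ω|ℱ k]
        =ᵐ[μ] μ[fun ω => 1 + Θ k ω|ℱ k] + μ[φ|ℱ k] :=
      condExp_add ((integrable_const 1).add (h_int k hk)) hφ_int _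
    have hadd2 : μ[fun ω => 1 + Θ k ω|ℱ k]
        =ᵐ[μ] μ[fun _ => (1 : ℝ)|ℱ k] + μ[Θ k|ℱ k] :=
      condExp_add (integrable_const 1) (h_int k hk) _
    have hconst : μ[fun _ => (1 : ℝ)|ℱ k] = fun _ => (1 : ℝ) :=
      condExp_const (ℱ.le k) 1
    filter_upwards [hmono, hadd1, hadd2, h_cond k hk, h_bound k hk] with ω h1 h2 h3 h4 h5
    have h3' : (μ[fun ω => 1 + Θ k ω|ℱ k]) ω = 1 + (μ[Θ k|ℱ k]) ω := by
      rw [h3]; simp [hconst]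
    calc (μ[fun ω => Real.exp (Θ k ω)|ℱ k]) ω
        ≤ (μ[fun ω => 1 + Θ k ω + φ ω|ℱ k]) ω := h1
      _ = (μ[fun ω => 1 + Θ k ω|ℱ k]) ω + (μ[φ|ℱ k]) ω := h2
      _ = 1 + (μ[Θ k|ℱ k]) ω + (μ[φ|ℱ k]) ω := by rw [h3']
      _ ≤ 1 + 0 + C / m := by
          have h4' : (μ[Θ k|ℱ k]) ω = 0 := h4
          rw [h4']
          exact add_le_add_right h5 _
      _ = 1 + C / m := by ring
  -- the main induction
  have main : ∀ n, n ≤ m →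
      Integrable (fun ω => Real.exp (∑ k ∈ Finset.range n, Θ k ω)) μ ∧
      ∫ ω, Real.exp (∑ k ∈ Finset.range n, Θ k ω) ∂μ ≤ (1 + C / m) ^ n := by
    intro n
    induction n with
    | zero =>
      intro _
      simp only [Finset.range_zero, Finset.sum_empty, Real.exp_zero, pow_zero]
      exact ⟨integrable_const 1, by simp⟩
    | succ n ih =>
      intro hn1
      have hn : n < m := hn1
      obtain ⟨ih_int, ih_bd⟩ := ih hn.le
      -- f = exp(S n), g = exp(Θ n)
      have hSn_meas : StronglyMeasurable[ℱ n]
          (fun ω => Real.exp (∑ k ∈ Finset.range n, Θ k ω)) := by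
        have hsum : Measurable[ℱ n] (fun ω => ∑ k ∈ Finset.range n, Θ k ω) := by
          refine Finset.measurable_sum _ fun k hk => ?_
          have hk' : k + 1 ≤ n := Finset.mem_range.1 hk
          exact ((h_meas k (lt_of_lt_of_le (Finset.mem_range.1 hk) hn.le)).mono
            (ℱ.mono hk')).measurable
        exact hsum.exp.stronglyMeasurable
      have hres := aux_mul_bound μ (ℱ.le n) hSn_meas
        (fun ω => (Real.exp_pos _).le) ih_int
        (fun ω => (Real.exp_pos _).le) (hexpΘ_int n hn)
        (by positivity : (0:ℝ) ≤ 1 + C / m) (hcond_bound n hn)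
      have heq : ∀ ω, Real.exp (∑ k ∈ Finset.range (n + 1), Θ k ω)
          = Real.exp (∑ k ∈ Finset.range n, Θ k ω) * Real.exp (Θ n ω) := by
        intro ω
        rw [Finset.sum_range_succ, Real.exp_add]
      constructor
      · exact hres.1.congr (Eventually.of_forall fun ω => (heq ω).symm)
      · calc ∫ ω, Real.exp (∑ k ∈ Finset.range (n + 1), Θ k ω) ∂μ
            = ∫ ω, Real.exp (∑ k ∈ Finset.range n, Θ k ω) * Real.exp (Θ n ω) ∂μ :=
              integral_congr_ae (Eventually.of_forall heq)
          _ ≤ (1 + C / m) * ∫ ω, Real.exp (∑ k ∈ Finset.range n, Θ k ω) ∂μ := hres.2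
          _ ≤ (1 + C / m) * (1 + C / m) ^ n :=
              mul_le_mul_of_nonneg_left ih_bd (by positivity)
          _ = (1 + C / m) ^ (n + 1) := by ring
  obtain ⟨hS_int, hS_bd⟩ := main m le_rfl
  -- (1 + C/m)^m ≤ exp C
  have hpow : (1 + C / m) ^ m ≤ Real.exp C := by
    calc (1 + C / m) ^ m ≤ (Real.exp (C / m)) ^ m := by
          refine pow_le_pow_left₀ (by positivity) ?_ m
          have := Real.add_one_le_exp (C / m)
          linarith
      _ = Real.exp C := by
          rw [← Real.exp_nat_mul]
          congr 1
          field_simp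
  have hint_bd : ∫ ω, Real.exp (∑ k ∈ Finset.range m, Θ k ω) ∂μ ≤ Real.exp C :=
    hS_bd.trans hpow
  -- Markov
  have hset : {ω | b ≤ ∑ k ∈ Finset.range m, Θ k ω}
      = {ω | Real.exp b ≤ Real.exp (∑ k ∈ Finset.range m, Θ k ω)} := by
    ext ω; simp [Real.exp_le_exp]
  have hmarkov := mul_meas_ge_le_integral_of_nonneg
    (Eventually.of_forall fun ω => (Real.exp_pos (∑ k ∈ Finset.range m, Θ k ω)).le)
    hS_int (Real.exp b)
  rw [← hset] at hmarkov
  have hfin : μ {ω | b ≤ ∑ k ∈ Finset.range m, Θ k ω} ≠ ⊤ := measure_ne_top μ _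
  rw [ENNReal.le_ofReal_iff_toReal_le hfin (Real.exp_pos _).le]
  have h1 : (μ {ω | b ≤ ∑ k ∈ Finset.range m, Θ k ω}).toReal
      ≤ Real.exp C / Real.exp b := by
    rw [le_div_iff₀ (Real.exp_pos b)]
    calc (μ _).toReal * Real.exp b = Real.exp b * (μ _).toReal := mul_comm _ _
      _ ≤ _ := hmarkov.trans hint_bd
  calc (μ {ω | b ≤ ∑ k ∈ Finset.range m, Θ k ω}).toReal
      ≤ Real.exp C / Real.exp b := h1
    _ = Real.exp (C - b) := by rw [Real.exp_sub]
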